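/- Let N be a quantum channel with Choi matrix Γ^N_{AB} = (id_A ⊗ N)(|Γ⟩⟨Γ|_{AA'}), where |Γ⟩ = Σ_i |i⟩|i⟩. For any density operators ρ_A and σ_B with appropriate supports and any α ∈ (1,∞), D̃_α(ρ_A^{1/2} Γ^N_{AB} ρ_A^{1/2} ‖ ρ_A ⊗ σ_B) = (α/(α-1)) log ‖ (Γ^N_{AB})^{1/2} (ρ_A^{1/α} ⊗ σ_B^{(1-α)/α}) (Γ^N_{AB})^{1/2} ‖_α. -/

import Mathlib

open scoped Kronecker
open Matrix
open scoped ComplexOrder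

/-- Matrix power `A^r` for real `r`, via the spectral decomposition of a Hermitian matrix
(with the convention `0 ^ r = 0` on the kernel, i.e. functional calculus on the support);
junk value `0` if `A` is not Hermitian. -/
noncomputable def mpow {m : Type*} [Fintype m] [DecidableEq m] (A : Matrix m m ℂ) (r : ℝ) :
    Matrix m m ℂ :=
  if hA : A.IsHermitian then
    (hA.eigenvectorUnitary : Matrix m m ℂ) *
      Matrix.diagonal (fun i => ((hA.eigenvalues i ^ r : ℝ) : ℂ)) *
      (star (hA.eigenvectorUnitary : Matrix m m ℂ))
  else 0

/-- Matrix logarithm (base 2) of a Hermitian matrix, via functional calculus on the support. -/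
noncomputable def mlog2 {m : Type*} [Fintype m] [DecidableEq m] (A : Matrix m m ℂ) :
    Matrix m m ℂ :=
  if hA : A.IsHermitian then
    (hA.eigenvectorUnitary : Matrix m m ℂ) *
      Matrix.diagonal (fun i => ((Real.logb 2 (hA.eigenvalues i) : ℝ) : ℂ)) *
      (star (hA.eigenvectorUnitary : Matrix m m ℂ))
  else 0

/-- Schatten `α`-norm `‖X‖_α = (Tr[(X†X)^(α/2)])^(1/α)`. -/
noncomputable def schattenNorm {m : Type*} [Fintype m] [DecidableEq m] (α : ℝ)
    (X : Matrix m m ℂ) : ℝ :=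
  ((mpow (Xᴴ * X) (α / 2)).trace.re) ^ (1 / α)

/-- A density operator: positive semidefinite with unit trace. -/
def IsDensity {m : Type*} [Fintype m] (ρ : Matrix m m ℂ) : Prop :=
  ρ.PosSemidef ∧ ρ.trace = 1

/-- Support inclusion `supp ρ ⊆ supp σ`, expressed via inclusion of kernels. -/
def SuppLE {m : Type*} [Fintype m] (ρ σ : Matrix m m ℂ) : Prop :=
  ∀ v : m → ℂ, σ.mulVec v = 0 → ρ.mulVec v = 0

/-- The sandwiched Rényi relative entropy
`D̃_α(ρ‖σ) = (1/(α-1)) log₂ Tr{(σ^((1-α)/(2α)) ρ σ^((1-α)/(2α)))^α}`. -/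
noncomputable def sRenyi {m : Type*} [Fintype m] [DecidableEq m] (α : ℝ)
    (ρ σ : Matrix m m ℂ) : ℝ :=
  (α - 1)⁻¹ * Real.logb 2
    ((mpow (mpow σ ((1 - α) / (2 * α)) * ρ * mpow σ ((1 - α) / (2 * α))) α).trace.re)

/-- The traditional quantum Rényi relative entropy
`D_α(ρ‖σ) = (1/(α-1)) log₂ Tr{ρ^α σ^(1-α)}`. -/
noncomputable def tRenyi {m : Type*} [Fintype m] [DecidableEq m] (α : ℝ)
    (ρ σ : Matrix m m ℂ) : ℝ :=
  (α - 1)⁻¹ * Real.logb 2 ((mpow ρ α * mpow σ (1 - α)).trace.re)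

/-- Partial trace over the first (A) factor. -/
noncomputable def ptraceA {a b : Type*} [Fintype a] (M : Matrix (a × b) (a × b) ℂ) :
    Matrix b b ℂ :=
  Matrix.of fun i j => ∑ k, M (k, i) (k, j)

/-- Partial trace over the second (B) factor. -/
noncomputable def ptraceB {a b : Type*} [Fintype b] (M : Matrix (a × b) (a × b) ℂ) :
    Matrix a a ℂ :=
  Matrix.of fun i j => ∑ k, M (i, k) (j, k)

/-- The Choi matrix `Γ^N_{AB} = (id_A ⊗ N)(|Γ⟩⟨Γ|)` of a linear map on matrices,
where `|Γ⟩ = Σ_i |i⟩|i⟩`. -/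
noncomputable def choi {a b : Type*} [Fintype a] [DecidableEq a]
    (N : Matrix a a ℂ →ₗ[ℂ] Matrix b b ℂ) : Matrix (a × b) (a × b) ℂ :=
  Matrix.of fun p q => N (Matrix.single p.1 q.1 1) p.2 q.2

/-- A quantum channel: completely positive (positive semidefinite Choi matrix) and
trace preserving. -/
def IsCPTP {a b : Type*} [Fintype a] [DecidableEq a] [Fintype b]
    (N : Matrix a a ℂ →ₗ[ℂ] Matrix b b ℂ) : Prop :=
  (choi N).PosSemidef ∧ ∀ X : Matrix a a ℂ, (N X).trace = X.trace


section Aux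

open Polynomial

namespace SRAux

variable {n : Type*} [Fintype n] [DecidableEq n]

lemma conj_diag_mul (U : Matrix n n ℂ) (hU' : star U * U = 1) (a b : n → ℂ) :
    (U * Matrix.diagonal a * star U) * (U * Matrix.diagonal b * star U)
      = U * Matrix.diagonal (fun i => a i * b i) * star U := by
  have : (U * Matrix.diagonal a * star U) * (U * Matrix.diagonal b * star U)
      = U * (Matrix.diagonal a * (star U * U) * Matrix.diagonal b) * star U := by
    simp only [Matrix.mul_assoc]
  rw [this, hU', Matrix.mul_one, Matrix.diagonal_mul_diagonal]

lemma isHermitian_conj_diag (U : Matrix n n ℂ) (d : n → ℝ) :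
    (U * Matrix.diagonal (fun i => (d i : ℂ)) * star U).IsHermitian := by
  have hd : (Matrix.diagonal (fun i => (d i : ℂ)))ᴴ
      = Matrix.diagonal (fun i => (d i : ℂ)) := by
    ext i j
    by_cases h : i = j
    · subst h
      simp [Matrix.conjTranspose_apply, Complex.conj_ofReal]
    · rw [Matrix.conjTranspose_apply, Matrix.diagonal_apply_ne _ (Ne.symm h),
        Matrix.diagonal_apply_ne _ h, star_zero]
  show _ = _
  rw [Matrix.star_eq_conjTranspose]
  rw [Matrix.conjTranspose_mul, Matrix.conjTranspose_mul, hd,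
    Matrix.conjTranspose_conjTranspose, Matrix.mul_assoc]

lemma trace_conj_diag (U : Matrix n n ℂ) (hU' : star U * U = 1) (d : n → ℂ) :
    (U * Matrix.diagonal d * star U).trace = ∑ i, d i := by
  rw [Matrix.trace_mul_cycle, hU', Matrix.one_mul, Matrix.trace_diagonal]

lemma conj_pow (U A : Matrix n n ℂ) (hU : U * star U = 1) (hU' : star U * U = 1) (k : ℕ) :
    (U * A * star U) ^ k = U * A ^ k * star U := by
  induction k with
  | zero => simp [pow_zero, Matrix.mul_one, hU]
  | succ k ih =>
      rw [pow_succ, ih, pow_succ]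
      have : U * A ^ k * star U * (U * A * star U)
          = U * (A ^ k * (star U * U) * A) * star U := by
        simp only [Matrix.mul_assoc]
      rw [this, hU', Matrix.mul_one, Matrix.mul_assoc]

lemma aeval_conj (U A : Matrix n n ℂ) (hU : U * star U = 1) (hU' : star U * U = 1)
    (q : ℂ[X]) :
    Polynomial.aeval (U * A * star U) q = U * Polynomial.aeval A q * star U := by
  induction q using Polynomial.induction_on' with
  | add p q hp hq =>
      rw [map_add, map_add, hp, hq, Matrix.mul_add, Matrix.add_mul]
  | monomial k c =>
      rw [aeval_monomial, aeval_monomial, conj_pow U A hU hU' k]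
      rw [Algebra.algebraMap_eq_smul_one]
      simp [Matrix.smul_mul, Matrix.mul_smul, Matrix.one_mul]

lemma aeval_diagonal (d : n → ℂ) (q : ℂ[X]) :
    Polynomial.aeval (Matrix.diagonal d) q
      = Matrix.diagonal (fun i => Polynomial.aeval (d i) q) := by
  have h1 : Matrix.diagonal d = Matrix.diagonalAlgHom ℂ d := rfl
  rw [h1, aeval_algHom_apply]
  show Matrix.diagonal _ = _
  rw [Matrix.diagonal_eq_diagonal_iff]
  intro i
  exact (aeval_algHom_apply (Pi.evalAlgHom ℂ (fun _ => ℂ) i) d q).symm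

lemma exists_poly_eval (s : Finset ℝ) (f : ℝ → ℝ) :
    ∃ p : ℝ[X], ∀ x ∈ s, p.eval x = f x :=
  ⟨Lagrange.interpolate s id f, fun x hx =>
    Lagrange.eval_interpolate_at_node f (Set.injOn_id _) hx⟩

lemma aeval_ofReal_map (p : ℝ[X]) (x : ℝ) :
    Polynomial.aeval (x : ℂ) (p.map (algebraMap ℝ ℂ)) = ((p.eval x : ℝ) : ℂ) := by
  rw [Polynomial.aeval_def, Polynomial.eval₂_eq_eval_map, Polynomial.map_map]
  have : (algebraMap ℂ ℂ).comp (algebraMap ℝ ℂ) = algebraMap ℝ ℂ := by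
    ext y; simp
  rw [this]
  have := Polynomial.eval₂_at_apply (algebraMap ℝ ℂ) x (p := p)
  rw [Polynomial.eval_map]
  simpa using this

lemma mpow_eq_aeval {A : Matrix n n ℂ} (hA : A.IsHermitian) (r : ℝ) (p : ℝ[X])
    (hp : ∀ i, p.eval (hA.eigenvalues i) = hA.eigenvalues i ^ r) :
    mpow A r = Polynomial.aeval A (p.map (algebraMap ℝ ℂ)) := by
  have hU : (hA.eigenvectorUnitary : Matrix n n ℂ)
      * star (hA.eigenvectorUnitary : Matrix n n ℂ) = 1 :=
    Matrix.mem_unitaryGroup_iff.mp hA.eigenvectorUnitary.2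
  have hU' : star (hA.eigenvectorUnitary : Matrix n n ℂ)
      * (hA.eigenvectorUnitary : Matrix n n ℂ) = 1 :=
    Matrix.mem_unitaryGroup_iff'.mp hA.eigenvectorUnitary.2
  rw [mpow, dif_pos hA]
  conv_rhs => rw [hA.spectral_theorem, Unitary.conjStarAlgAut_apply]
  rw [aeval_conj _ _ hU hU', aeval_diagonal]
  congr 1
  congr 1
  rw [Matrix.diagonal_eq_diagonal_iff]
  intro i
  have h2 : ((RCLike.ofReal ∘ hA.eigenvalues) i : ℂ) = ((hA.eigenvalues i : ℝ) : ℂ) := rfl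
  rw [h2, aeval_ofReal_map, hp i]

lemma mpow_eq_conj {A : Matrix n n ℂ} (hA : A.IsHermitian) (U : Matrix n n ℂ)
    (hU : U * star U = 1) (hU' : star U * U = 1) (d : n → ℝ)
    (hd : A = U * Matrix.diagonal (fun i => (d i : ℂ)) * star U) (r : ℝ) :
    mpow A r = U * Matrix.diagonal (fun i => ((d i ^ r : ℝ) : ℂ)) * star U := by
  obtain ⟨p, hp⟩ := exists_poly_eval
    ((Finset.univ.image d) ∪ (Finset.univ.image hA.eigenvalues)) (fun x => x ^ r)
  rw [mpow_eq_aeval hA r p (fun i => hp _ (Finset.mem_union_right _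
    (Finset.mem_image_of_mem _ (Finset.mem_univ i))))]
  rw [hd, aeval_conj _ _ hU hU', aeval_diagonal]
  congr 1
  congr 1
  rw [Matrix.diagonal_eq_diagonal_iff]
  intro i
  rw [aeval_ofReal_map, hp _ (Finset.mem_union_left _
    (Finset.mem_image_of_mem _ (Finset.mem_univ i)))]

lemma mpow_isHermitian (A : Matrix n n ℂ) (r : ℝ) : (mpow A r).IsHermitian := by
  rw [mpow]
  split_ifs with hA
  · exact isHermitian_conj_diag _ _
  · exact Matrix.isHermitian_zero

lemma mpow_mul_mpow {A : Matrix n n ℂ} (hA : A.IsHermitian)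
    (h0 : ∀ i, 0 ≤ hA.eigenvalues i) {r s : ℝ} (hrs : r + s ≠ 0) :
    mpow A r * mpow A s = mpow A (r + s) := by
  have hU' : star (hA.eigenvectorUnitary : Matrix n n ℂ)
      * (hA.eigenvectorUnitary : Matrix n n ℂ) = 1 :=
    Matrix.mem_unitaryGroup_iff'.mp hA.eigenvectorUnitary.2
  rw [mpow, mpow, mpow, dif_pos hA, dif_pos hA, dif_pos hA, conj_diag_mul _ hU']
  congr 1
  congr 1
  rw [Matrix.diagonal_eq_diagonal_iff]
  intro i
  rw [← Complex.ofReal_mul]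
  congr 1
  exact (Real.rpow_add' (h0 i) hrs).symm

lemma mpow_one {A : Matrix n n ℂ} (hA : A.IsHermitian) : mpow A 1 = A := by
  rw [mpow, dif_pos hA]
  conv_rhs => rw [hA.spectral_theorem]
  congr 1
  congr 1
  rw [Matrix.diagonal_eq_diagonal_iff]
  intro i
  rw [Real.rpow_one]
  rfl

lemma trace_mpow {A : Matrix n n ℂ} (hA : A.IsHermitian) (r : ℝ) :
    (mpow A r).trace = ((∑ i, hA.eigenvalues i ^ r : ℝ) : ℂ) := by
  have hU' : star (hA.eigenvectorUnitary : Matrix n n ℂ)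
      * (hA.eigenvectorUnitary : Matrix n n ℂ) = 1 :=
    Matrix.mem_unitaryGroup_iff'.mp hA.eigenvectorUnitary.2
  rw [mpow, dif_pos hA, trace_conj_diag _ hU']
  push_cast
  rfl

variable {a b : Type*} [Fintype a] [DecidableEq a] [Fintype b] [DecidableEq b]

lemma kron_conjTranspose (P : Matrix a a ℂ) (Q : Matrix b b ℂ) :
    (P ⊗ₖ Q)ᴴ = Pᴴ ⊗ₖ Qᴴ := by
  ext ⟨i, j⟩ ⟨k, l⟩
  simp [Matrix.conjTranspose_apply, Matrix.kroneckerMap_apply, star_mul']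

lemma mpow_kronecker {P : Matrix a a ℂ} {Q : Matrix b b ℂ}
    (hP : P.PosSemidef) (hQ : Q.PosSemidef) (r : ℝ) :
    mpow (P ⊗ₖ Q) r = mpow P r ⊗ₖ mpow Q r := by
  set U : Matrix a a ℂ := (hP.1.eigenvectorUnitary : Matrix a a ℂ) with hUdef
  set V : Matrix b b ℂ := (hQ.1.eigenvectorUnitary : Matrix b b ℂ) with hVdef
  have hUu : U * star U = 1 := Matrix.mem_unitaryGroup_iff.mp hP.1.eigenvectorUnitary.2
  have hUu' : star U * U = 1 := Matrix.mem_unitaryGroup_iff'.mp hP.1.eigenvectorUnitary.2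
  have hVu : V * star V = 1 := Matrix.mem_unitaryGroup_iff.mp hQ.1.eigenvectorUnitary.2
  have hVu' : star V * V = 1 := Matrix.mem_unitaryGroup_iff'.mp hQ.1.eigenvectorUnitary.2
  have hstar : star (U ⊗ₖ V) = star U ⊗ₖ star V := by
    rw [Matrix.star_eq_conjTranspose, Matrix.star_eq_conjTranspose,
      Matrix.star_eq_conjTranspose, kron_conjTranspose]
  have hWu : (U ⊗ₖ V) * star (U ⊗ₖ V) = 1 := by
    rw [hstar, ← Matrix.mul_kronecker_mul, hUu, hVu, Matrix.one_kronecker_one]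
  have hWu' : star (U ⊗ₖ V) * (U ⊗ₖ V) = 1 := by
    rw [hstar, ← Matrix.mul_kronecker_mul, hUu', hVu', Matrix.one_kronecker_one]
  have hrep : P ⊗ₖ Q = (U ⊗ₖ V) * Matrix.diagonal
      (fun p : a × b => ((hP.1.eigenvalues p.1 * hQ.1.eigenvalues p.2 : ℝ) : ℂ))
      * star (U ⊗ₖ V) := by
    conv_lhs => rw [hP.1.spectral_theorem, Unitary.conjStarAlgAut_apply, hQ.1.spectral_theorem,
      Unitary.conjStarAlgAut_apply]
    rw [Matrix.mul_kronecker_mul, Matrix.mul_kronecker_mul,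
      Matrix.diagonal_kronecker_diagonal, ← hstar]
    congr 1
    congr 1
    rw [Matrix.diagonal_eq_diagonal_iff]
    intro p
    push_cast
    rfl
  have hHerm : (P ⊗ₖ Q).IsHermitian := by
    rw [hrep]; exact isHermitian_conj_diag _ _
  rw [mpow_eq_conj hHerm _ hWu hWu' _ hrep r]
  rw [mpow, dif_pos hP.1, mpow, dif_pos hQ.1]
  rw [← hUdef, ← hVdef]
  conv_rhs => rw [Matrix.mul_kronecker_mul, Matrix.mul_kronecker_mul,
    Matrix.diagonal_kronecker_diagonal]
  rw [← hstar]
  congr 1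
  congr 1
  rw [Matrix.diagonal_eq_diagonal_iff]
  intro p
  rw [Real.mul_rpow (hP.eigenvalues_nonneg p.1) (hQ.eigenvalues_nonneg p.2)]
  push_cast
  rfl

lemma comm_aeval (B : Matrix n n ℂ) (q : ℂ[X]) :
    B * Polynomial.aeval (Bᴴ * B) q = Polynomial.aeval (B * Bᴴ) q * B := by
  induction q using Polynomial.induction_on' with
  | add p q hp hq => rw [map_add, map_add, Matrix.mul_add, Matrix.add_mul, hp, hq]
  | monomial k c =>
      rw [aeval_monomial, aeval_monomial]
      have hpow : ∀ m : ℕ, B * (Bᴴ * B) ^ m = (B * Bᴴ) ^ m * B := by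
        intro m
        induction m with
        | zero => simp
        | succ m ih =>
            rw [pow_succ, pow_succ, ← Matrix.mul_assoc, ih]
            simp only [Matrix.mul_assoc]
      rw [Algebra.algebraMap_eq_smul_one]
      simp only [Matrix.smul_mul, Matrix.mul_smul, Matrix.one_mul, Matrix.mul_one]
      rw [hpow]

lemma trace_mpow_conjT (B : Matrix n n ℂ) {r : ℝ} (hr : r ≠ 0) :
    (mpow (Bᴴ * B) r).trace = (mpow (B * Bᴴ) r).trace := by
  have hA1 : (Bᴴ * B).IsHermitian := Matrix.isHermitian_conjTranspose_mul_self B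
  have hA2 : (B * Bᴴ).IsHermitian := Matrix.isHermitian_mul_conjTranspose_self B
  obtain ⟨p, hp⟩ := exists_poly_eval
    (insert (0 : ℝ) ((Finset.univ.image hA1.eigenvalues)
      ∪ (Finset.univ.image hA2.eigenvalues))) (fun x => x ^ r)
  have hp0 : p.eval 0 = 0 := by
    rw [hp 0 (Finset.mem_insert_self _ _)]
    exact Real.zero_rpow hr
  obtain ⟨q, hq⟩ : (X : ℝ[X]) ∣ p := by
    rw [Polynomial.X_dvd_iff, Polynomial.coeff_zero_eq_eval_zero, hp0]
  rw [mpow_eq_aeval hA1 r p (fun i => hp _ (Finset.mem_insert_of_mem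
      (Finset.mem_union_left _ (Finset.mem_image_of_mem _ (Finset.mem_univ i))))),
    mpow_eq_aeval hA2 r p (fun i => hp _ (Finset.mem_insert_of_mem
      (Finset.mem_union_right _ (Finset.mem_image_of_mem _ (Finset.mem_univ i))))),
    hq]
  rw [Polynomial.map_mul, Polynomial.map_X]
  simp only [_root_.map_mul, Polynomial.aeval_X]
  calc (Bᴴ * B * Polynomial.aeval (Bᴴ * B) (q.map (algebraMap ℝ ℂ))).trace
      = (Bᴴ * (B * Polynomial.aeval (Bᴴ * B) (q.map (algebraMap ℝ ℂ)))).trace := by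
        rw [Matrix.mul_assoc]
    _ = (Bᴴ * (Polynomial.aeval (B * Bᴴ) (q.map (algebraMap ℝ ℂ)) * B)).trace := by
        rw [comm_aeval]
    _ = ((Polynomial.aeval (B * Bᴴ) (q.map (algebraMap ℝ ℂ)) * B) * Bᴴ).trace := by
        rw [Matrix.trace_mul_comm]
    _ = (B * Bᴴ * Polynomial.aeval (B * Bᴴ) (q.map (algebraMap ℝ ℂ))).trace := by
        rw [Matrix.mul_assoc, Matrix.trace_mul_comm]

lemma trace_mpow_sq {A : Matrix n n ℂ} (hA : A.PosSemidef) {r : ℝ} (hr : r ≠ 0) :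
    (mpow (A * A) (r / 2)).trace = (mpow A r).trace := by
  have hU : ((hA.1.eigenvectorUnitary : Matrix n n ℂ))
      * star (hA.1.eigenvectorUnitary : Matrix n n ℂ) = 1 :=
    Matrix.mem_unitaryGroup_iff.mp hA.1.eigenvectorUnitary.2
  have hU' : star ((hA.1.eigenvectorUnitary : Matrix n n ℂ))
      * (hA.1.eigenvectorUnitary : Matrix n n ℂ) = 1 :=
    Matrix.mem_unitaryGroup_iff'.mp hA.1.eigenvectorUnitary.2
  have hrep : A * A = (hA.1.eigenvectorUnitary : Matrix n n ℂ) * Matrix.diagonal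
      (fun i => ((hA.1.eigenvalues i * hA.1.eigenvalues i : ℝ) : ℂ))
      * star (hA.1.eigenvectorUnitary : Matrix n n ℂ) := by
    conv_lhs => rw [hA.1.spectral_theorem, Unitary.conjStarAlgAut_apply]
    rw [conj_diag_mul _ hU']
    congr 1
    congr 1
    rw [Matrix.diagonal_eq_diagonal_iff]
    intro i
    push_cast
    rfl
  have hHerm : (A * A).IsHermitian := by rw [hrep]; exact isHermitian_conj_diag _ _
  rw [mpow_eq_conj hHerm _ hU hU' _ hrep (r / 2), trace_conj_diag _ hU',
    trace_mpow hA.1 r]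
  push_cast
  refine Finset.sum_congr rfl fun i _ => ?_
  have h0 := hA.eigenvalues_nonneg i
  norm_cast
  rw [Real.mul_rpow h0 h0, ← Real.rpow_add' h0 (by simpa using hr)]
  norm_num

end SRAux

end Aux

/-- For a quantum channel `N` with Choi matrix `Γ^N`, density operators
`ρ_A, σ_B` (with appropriate supports, here taken positive definite) and `α ∈ (1,∞)`,
`D̃_α(ρ_A^{1/2} Γ^N ρ_A^{1/2} ‖ ρ_A ⊗ σ_B)
  = (α/(α-1)) log₂ ‖(Γ^N)^{1/2} (ρ_A^{1/α} ⊗ σ_B^{(1-α)/α}) (Γ^N)^{1/2}‖_α`. -/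
theorem sRenyi_choi_eq_log_schattenNorm {a b : Type*} [Fintype a] [DecidableEq a]
    [Fintype b] [DecidableEq b]
    (N : Matrix a a ℂ →ₗ[ℂ] Matrix b b ℂ) (hN : IsCPTP N)
    (α : ℝ) (hα : 1 < α)
    (ρA : Matrix a a ℂ) (hρ : IsDensity ρA) (hρpd : ρA.PosDef)
    (σB : Matrix b b ℂ) (hσ : IsDensity σB) (hσpd : σB.PosDef) :
    sRenyi α
        ((mpow ρA (1 / 2) ⊗ₖ (1 : Matrix b b ℂ)) * choi N *
          (mpow ρA (1 / 2) ⊗ₖ (1 : Matrix b b ℂ)))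
        (ρA ⊗ₖ σB) =
      (α / (α - 1)) *
        Real.logb 2
          (schattenNorm α
            (mpow (choi N) (1 / 2) * (mpow ρA (1 / α) ⊗ₖ mpow σB ((1 - α) / α)) *
              mpow (choi N) (1 / 2))) := by
  classical
  obtain ⟨hΓps, htp⟩ := hN
  have hρps : ρA.PosSemidef := hρpd.posSemidef
  have hσps : σB.PosSemidef := hσpd.posSemidef
  have hα0 : α ≠ 0 := by positivity
  have hα1 : α - 1 ≠ 0 := sub_ne_zero.mpr (ne_of_gt hα)
  have h1α : 1 - α ≠ 0 := by intro h; apply hα1; linarith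
  set c : ℝ := (1 - α) / (2 * α) with hc
  set Γ : Matrix (a × b) (a × b) ℂ := choi N with hΓdef
  set G : Matrix (a × b) (a × b) ℂ := mpow Γ (1 / 2) with hG
  set K : Matrix (a × b) (a × b) ℂ := mpow ρA (c + 1 / 2) ⊗ₖ mpow σB c with hK
  set B : Matrix (a × b) (a × b) ℂ := G * K with hB
  -- basic hermitian facts
  have hGH : Gᴴ = G := SRAux.mpow_isHermitian Γ (1 / 2)
  have hKH : Kᴴ = K := by
    rw [hK, SRAux.kron_conjTranspose, SRAux.mpow_isHermitian, SRAux.mpow_isHermitian]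
  have hBH : Bᴴ = K * G := by rw [hB, Matrix.conjTranspose_mul, hGH, hKH]
  -- arithmetic of exponents
  have h2α : (2 * α) ≠ 0 := by positivity
  have hcval : c + 1 / 2 = 1 / (2 * α) := by rw [hc]; field_simp; ring
  have hc12 : c + 1 / 2 ≠ 0 := by rw [hcval]; exact one_div_ne_zero h2α
  have hccval : c + 1 / 2 + (c + 1 / 2) = 1 / α := by rw [hc]; field_simp; ring
  have hccne : c + 1 / 2 + (c + 1 / 2) ≠ 0 := by rw [hccval]; exact one_div_ne_zero hα0
  have hcc : c + c = (1 - α) / α := by rw [hc]; field_simp; ring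
  have hccne2 : c + c ≠ 0 := by rw [hcc]; exact div_ne_zero h1α hα0
  have hGG : G * G = Γ := by
    rw [hG, SRAux.mpow_mul_mpow hΓps.1 hΓps.eigenvalues_nonneg (by norm_num)]
    norm_num
    exact SRAux.mpow_one hΓps.1
  -- E1 : the sandwiched operator equals Bᴴ * B
  have hkr : mpow (ρA ⊗ₖ σB) c = mpow ρA c ⊗ₖ mpow σB c :=
    SRAux.mpow_kronecker hρps hσps c
  have hE1 : mpow (ρA ⊗ₖ σB) c *
      ((mpow ρA (1 / 2) ⊗ₖ (1 : Matrix b b ℂ)) * Γ *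
        (mpow ρA (1 / 2) ⊗ₖ (1 : Matrix b b ℂ))) * mpow (ρA ⊗ₖ σB) c = Bᴴ * B := by
    have h2 : (mpow ρA c ⊗ₖ mpow σB c) * (mpow ρA (1 / 2) ⊗ₖ (1 : Matrix b b ℂ)) = K := by
      rw [← Matrix.mul_kronecker_mul,
        SRAux.mpow_mul_mpow hρps.1 hρps.eigenvalues_nonneg hc12, Matrix.mul_one, hK]
    have h3 : (mpow ρA (1 / 2) ⊗ₖ (1 : Matrix b b ℂ)) * (mpow ρA c ⊗ₖ mpow σB c) = K := by
      rw [← Matrix.mul_kronecker_mul,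
        SRAux.mpow_mul_mpow hρps.1 hρps.eigenvalues_nonneg (by rw [add_comm]; exact hc12),
        Matrix.one_mul, hK, add_comm]
    calc mpow (ρA ⊗ₖ σB) c *
        ((mpow ρA (1 / 2) ⊗ₖ (1 : Matrix b b ℂ)) * Γ *
          (mpow ρA (1 / 2) ⊗ₖ (1 : Matrix b b ℂ))) * mpow (ρA ⊗ₖ σB) c
        = ((mpow ρA c ⊗ₖ mpow σB c) * (mpow ρA (1 / 2) ⊗ₖ (1 : Matrix b b ℂ))) * Γ *
          ((mpow ρA (1 / 2) ⊗ₖ (1 : Matrix b b ℂ)) * (mpow ρA c ⊗ₖ mpow σB c)) := by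
          rw [hkr]
          simp only [Matrix.mul_assoc]
      _ = K * (G * G) * K := by rw [h2, h3, hGG]
      _ = Bᴴ * B := by rw [hBH, hB]; simp only [Matrix.mul_assoc]
  -- E2 : the operator inside the Schatten norm equals B * Bᴴ
  have hMKK : mpow ρA (1 / α) ⊗ₖ mpow σB ((1 - α) / α) = K * K := by
    have h4 : mpow ρA (c + 1 / 2) * mpow ρA (c + 1 / 2) = mpow ρA (1 / α) := by
      rw [SRAux.mpow_mul_mpow hρps.1 hρps.eigenvalues_nonneg hccne, hccval]
    have h5 : mpow σB c * mpow σB c = mpow σB ((1 - α) / α) := by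
      rw [SRAux.mpow_mul_mpow hσps.1 hσps.eigenvalues_nonneg hccne2, hcc]
    rw [hK, ← Matrix.mul_kronecker_mul, h4, h5]
  have hE2 : mpow Γ (1 / 2) * (mpow ρA (1 / α) ⊗ₖ mpow σB ((1 - α) / α)) * mpow Γ (1 / 2)
      = B * Bᴴ := by
    rw [hMKK, ← hG, hBH, hB]
    simp only [Matrix.mul_assoc]
  -- traces
  have hBBH : (B * Bᴴ).PosSemidef := Matrix.posSemidef_self_mul_conjTranspose B
  have htr1 : (mpow (Bᴴ * B) α).trace = (mpow (B * Bᴴ) α).trace :=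
    SRAux.trace_mpow_conjT B hα0
  have htr2 : (mpow ((B * Bᴴ)ᴴ * (B * Bᴴ)) (α / 2)).trace = (mpow (B * Bᴴ) α).trace := by
    rw [Matrix.isHermitian_mul_conjTranspose_self B]
    exact SRAux.trace_mpow_sq hBBH hα0
  set t : ℝ := ∑ i, (Matrix.isHermitian_mul_conjTranspose_self B).eigenvalues i ^ α with ht
  have htt : (mpow (B * Bᴴ) α).trace = (t : ℂ) :=
    SRAux.trace_mpow (Matrix.isHermitian_mul_conjTranspose_self B) α
  have ht0 : 0 ≤ t := by
    rw [ht]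
    exact Finset.sum_nonneg fun i _ =>
      Real.rpow_nonneg (hBBH.eigenvalues_nonneg i) α
  -- unfold and conclude
  rw [sRenyi, schattenNorm, hE1, hE2, htr1, htt]
  rw [show ((B * Bᴴ)ᴴ * (B * Bᴴ) : Matrix (a × b) (a × b) ℂ)
      = (B * Bᴴ)ᴴ * (B * Bᴴ) from rfl] at htr2
  rw [htt] at htr2
  rw [htr2, Complex.ofReal_re]
  rcases eq_or_lt_of_le ht0 with h | h
  · rw [← h, Real.zero_rpow (one_div_ne_zero hα0), Real.logb_zero, mul_zero, mul_zero]
  · rw [Real.logb, Real.logb, Real.log_rpow h]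
    field_simp
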